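/- Let Δ be a nonsquare integer with Δ ≡ 0 or 1 (mod 4). If (r,s) and (t,u) are integer points on the Pell conic X² − ΔY² = 4, then (rt + Δsu)/2 and (ru + st)/2 are integers, and the pair ((rt + Δsu)/2, (ru + st)/2) again satisfies X² − ΔY² = 4. Moreover, if (r,s) ≠ (t,u) and r ≠ t, then 2·(Δ(s−u)² + (r−t)²)/(Δ(s−u)² − (r−t)²) = (rt + Δsu)/2 and 4·(r−t)(s−u)/(Δ(s−u)² − (r−t)²) = (ru + st)/2. -/
import Mathlib

lemma zmod2_key : ∀ d a b c e : ZMod 2, a ^ 2 - d * b ^ 2 = 0 → c ^ 2 - d * e ^ 2 = 0 →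
    a * c + d * b * e = 0 ∧ a * e + b * c = 0 := by decide

/-- For a nonsquare integer `Δ ≡ 0, 1 (mod 4)` and integral points
`(r,s)`, `(t,u)` on the Pell conic `X² - ΔY² = 4`, the quantities `(rt + Δsu)/2`
and `(ru + st)/2` are integers and form again an integral point on the conic;
moreover if `(r,s) ≠ (t,u)` and `r ≠ t`, the chord-addition formulas agree with
these quantities. -/
theorem pell_addition_integral (Δ : ℤ) (hΔns : ¬ IsSquare Δ)
    (hΔ4 : Δ % 4 = 0 ∨ Δ % 4 = 1)
    (r s t u : ℤ) (hP : r ^ 2 - Δ * s ^ 2 = 4) (hQ : t ^ 2 - Δ * u ^ 2 = 4) :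
    (∃ X Y : ℤ,
      (X : ℚ) = ((r : ℚ) * t + (Δ : ℚ) * s * u) / 2 ∧
      (Y : ℚ) = ((r : ℚ) * u + (s : ℚ) * t) / 2 ∧
      X ^ 2 - Δ * Y ^ 2 = 4) ∧
    ((r, s) ≠ (t, u) → r ≠ t →
      2 * ((Δ : ℚ) * ((s : ℚ) - u) ^ 2 + ((r : ℚ) - t) ^ 2) /
          ((Δ : ℚ) * ((s : ℚ) - u) ^ 2 - ((r : ℚ) - t) ^ 2) =
        ((r : ℚ) * t + (Δ : ℚ) * s * u) / 2 ∧
      4 * (((r : ℚ) - t) * ((s : ℚ) - u)) /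
          ((Δ : ℚ) * ((s : ℚ) - u) ^ 2 - ((r : ℚ) - t) ^ 2) =
        ((r : ℚ) * u + (s : ℚ) * t) / 2) := by
  have hP2 : ((r : ZMod 2)) ^ 2 - (Δ : ZMod 2) * (s : ZMod 2) ^ 2 = 0 := by
    have := congrArg (fun z : ℤ => (z : ZMod 2)) hP
    push_cast at this; rw [this]; decide
  have hQ2 : ((t : ZMod 2)) ^ 2 - (Δ : ZMod 2) * (u : ZMod 2) ^ 2 = 0 := by
    have := congrArg (fun z : ℤ => (z : ZMod 2)) hQ
    push_cast at this; rw [this]; decide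
  obtain ⟨h1, h2⟩ := zmod2_key (Δ : ZMod 2) (r : ZMod 2) (s : ZMod 2) (t : ZMod 2) (u : ZMod 2)
    hP2 hQ2
  have hd1 : (2 : ℤ) ∣ r * t + Δ * s * u :=
    (ZMod.intCast_zmod_eq_zero_iff_dvd _ 2).mp (by push_cast; exact h1)
  have hd2 : (2 : ℤ) ∣ r * u + s * t :=
    (ZMod.intCast_zmod_eq_zero_iff_dvd _ 2).mp (by push_cast; exact h2)
  obtain ⟨k, hk⟩ := hd1
  obtain ⟨l, hl⟩ := hd2
  constructor
  · refine ⟨k, l, ?_, ?_, ?_⟩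
    · have h : ((r : ℚ) * t + (Δ : ℚ) * s * u) = 2 * k := by exact_mod_cast hk
      field_simp
      linarith
    · have h : ((r : ℚ) * u + (s : ℚ) * t) = 2 * l := by exact_mod_cast hl
      field_simp
      linarith
    · have h4 : 4 * (k ^ 2 - Δ * l ^ 2) = 16 := by
        have e1 : (2 * k) ^ 2 - Δ * (2 * l) ^ 2 = 16 := by
          rw [← hk, ← hl]
          linear_combination (t ^ 2 - Δ * u ^ 2) * hP + 4 * hQ
        linarith [e1]
      linarith
  · intro hne hrt
    have hPq : (r : ℚ) ^ 2 - (Δ : ℚ) * (s : ℚ) ^ 2 = 4 := by exact_mod_cast hP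
    have hQq : (t : ℚ) ^ 2 - (Δ : ℚ) * (u : ℚ) ^ 2 = 4 := by exact_mod_cast hQ
    have hD : (Δ : ℚ) * ((s : ℚ) - u) ^ 2 - ((r : ℚ) - t) ^ 2 ≠ 0 := by
      intro h
      have hz : Δ * (s - u) ^ 2 = (r - t) ^ 2 := by exact_mod_cast sub_eq_zero.mp h
      by_cases hsu : s = u
      · subst hsu
        simp at hz
        exact hrt (by nlinarith [sq_nonneg (r - t)])
      · have hdvd : (s - u) ^ 2 ∣ (r - t) ^ 2 := ⟨Δ, by linarith [hz]⟩
        have hdvd' : (s - u) ∣ (r - t) :=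
          (Int.pow_dvd_pow_iff two_ne_zero).mp hdvd
        obtain ⟨c, hc⟩ := hdvd'
        have hsu0 : (s - u) ^ 2 ≠ 0 := pow_ne_zero _ (sub_ne_zero.mpr hsu)
        have : Δ = c ^ 2 := by
          have h2 : (s - u) ^ 2 * Δ = (s - u) ^ 2 * c ^ 2 := by
            rw [hc] at hz; linarith [hz]
          exact mul_left_cancel₀ hsu0 h2
        exact hΔns ⟨c, by rw [this]; ring⟩
    constructor
    · rw [div_eq_div_iff hD two_ne_zero]
      linear_combination ((r : ℚ) * t + Δ * s * u - 4 - 2 * Δ * u ^ 2) * hPq +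
        ((r : ℚ) * t + Δ * s * u + 4 - 2 * r ^ 2) * hQq
    · rw [div_eq_div_iff hD two_ne_zero]
      linear_combination ((r : ℚ) * u + s * t - 2 * t * u) * hPq +
        ((r : ℚ) * u + s * t - 2 * r * s) * hQq
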